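/- For all t > 0, exp(−t²/20) ≤ t·e^{t/2}/(e^t − 1) ≤ 1. -/

import Mathlib

open NormedSpace
open scoped Nat

lemma stmt16_hasSum_sinh (s : ℝ) :
    HasSum (fun n : ℕ => s ^ (2 * n + 1) / ↑(2 * n + 1)!) (Real.sinh s) := by
  rw [Real.sinh_eq, Real.exp_eq_exp_ℝ]
  have := ((expSeries_div_hasSum_exp (𝔸 := ℝ) s).sub (expSeries_div_hasSum_exp (𝔸 := ℝ) (-s))).div_const 2
  replace := (Nat.divModEquiv 2).symm.hasSum_iff.mpr this
  dsimp [Function.comp_def] at this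
  simp only [Nat.divModEquiv_symm_apply] at this
  simp_rw [← mul_comm 2 _] at this
  refine this.prod_fiberwise fun k => ?_
  dsimp only
  convert hasSum_fintype (_ : Fin 2 → ℝ) using 1
  · rfl
  rw [Fin.sum_univ_two]
  have h1 : (-s) ^ (2 * k) = s ^ (2 * k) := (even_two_mul k).neg_pow s
  have h2 : (-s) ^ (2 * k + 1) = -(s ^ (2 * k + 1)) := (Odd.neg_pow ⟨k, by ring⟩ s)
  simp only [Fin.val_zero, Fin.val_one, add_zero, h1, h2]
  have hf1 : ((2 * k)! : ℝ) ≠ 0 := by positivity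
  have hf2 : ((2 * k + 1)! : ℝ) ≠ 0 := by positivity
  field_simp
  ring

lemma stmt16_fact_bound (k : ℕ) : 6 ^ k * k ! ≤ (2 * k + 1)! := by
  induction k with
  | zero => simp
  | succ n ih =>
    have h : 2 * (n + 1) + 1 = (2 * n + 1) + 2 := by ring
    rw [h]
    have : ((2*n+1)+2)! = ((2*n+1)+2) * (((2*n+1)+1) * (2*n+1)!) := by
      rw [Nat.factorial_succ, Nat.factorial_succ]
    rw [this, pow_succ, Nat.factorial_succ]
    calc 6 ^ n * 6 * ((n + 1) * n !) = (6 * (n+1)) * (6 ^ n * n !) := by ring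
    _ ≤ ((2*n+3) * (2*n+2)) * (2*n+1)! := by
        apply Nat.mul_le_mul
        · nlinarith
        · exact ih
    _ = ((2*n+1)+2) * (((2*n+1)+1) * (2*n+1)!) := by ring

lemma stmt16_sinh_le (s : ℝ) (hs : 0 ≤ s) : Real.sinh s ≤ s * Real.exp (s ^ 2 / 6) := by
  have hg : HasSum (fun k : ℕ => s * ((s ^ 2 / 6) ^ k / ↑k !)) (s * Real.exp (s ^ 2 / 6)) := by
    have := expSeries_div_hasSum_exp (𝔸 := ℝ) (s ^ 2 / 6)
    rw [← Real.exp_eq_exp_ℝ] at this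
    exact this.mul_left s
  refine hasSum_le (fun k => ?_) (stmt16_hasSum_sinh s) hg
  have hfact : ((6 : ℝ) ^ k * k ! : ℝ) ≤ ((2 * k + 1)! : ℝ) := by
    exact_mod_cast stmt16_fact_bound k
  have h1 : s ^ (2 * k + 1) = s * (s ^ 2) ^ k := by
    rw [← pow_mul]; ring
  have h2 : s * ((s ^ 2 / 6) ^ k / ↑k !) = s * ((s ^ 2) ^ k / (6 ^ k * ↑k !)) := by
    rw [div_pow, div_div]
  rw [h1, h2, mul_div_assoc]
  have hpos : (0:ℝ) < 6 ^ k * ↑k ! := by positivity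
  apply mul_le_mul_of_nonneg_left _ hs
  exact div_le_div_of_nonneg_left (by positivity) hpos hfact

/-- For all t > 0, e^{−t²/20} ≤ t·e^{t/2}/(e^t − 1) ≤ 1. -/
theorem stmt16 (t : ℝ) (ht : 0 < t) :
    Real.exp (-t ^ 2 / 20) ≤ t * Real.exp (t / 2) / (Real.exp t - 1) ∧
      t * Real.exp (t / 2) / (Real.exp t - 1) ≤ 1 := by
  have hden : 0 < Real.exp t - 1 := by
    have := Real.add_one_lt_exp (ne_of_gt ht)
    linarith
  have hsinh : Real.exp t - 1 = 2 * Real.exp (t / 2) * Real.sinh (t / 2) := by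
    rw [Real.sinh_eq]
    rw [show -(t/2) = t/2 - t by ring, Real.exp_sub]
    have h := Real.exp_pos (t/2)
    have : Real.exp (t/2) * Real.exp (t/2) = Real.exp t := by
      rw [← Real.exp_add]; ring_nf
    field_simp
    nlinarith [this]
  have hshpos : 0 < Real.sinh (t / 2) := by
    have := Real.self_le_sinh_iff.mpr (by linarith : (0:ℝ) ≤ t / 2)
    linarith
  constructor
  · rw [le_div_iff₀ hden, hsinh]
    have hle : Real.sinh (t/2) ≤ (t/2) * Real.exp ((t/2)^2/6) :=
      stmt16_sinh_le (t/2) (by linarith)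
    have h56 : Real.exp ((t/2)^2/6) ≤ Real.exp (t^2/20) := by
      apply Real.exp_le_exp.mpr; nlinarith
    have hexp : Real.exp (-t^2/20) * Real.exp (t^2/20) = 1 := by
      rw [← Real.exp_add]; ring_nf; exact Real.exp_zero
    have he1 : 0 < Real.exp (-t^2/20) := Real.exp_pos _
    have he2 : 0 < Real.exp (t/2) := Real.exp_pos _
    have he3 : 0 < Real.exp (t^2/20) := Real.exp_pos _
    calc Real.exp (-t^2/20) * (2 * Real.exp (t/2) * Real.sinh (t/2))
        ≤ Real.exp (-t^2/20) * (2 * Real.exp (t/2) * ((t/2) * Real.exp (t^2/20))) := by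
          have : Real.sinh (t/2) ≤ (t/2) * Real.exp (t^2/20) := by
            calc Real.sinh (t/2) ≤ (t/2) * Real.exp ((t/2)^2/6) := hle
            _ ≤ (t/2) * Real.exp (t^2/20) := by
                apply mul_le_mul_of_nonneg_left h56 (by linarith)
          apply mul_le_mul_of_nonneg_left _ (le_of_lt he1)
          exact mul_le_mul_of_nonneg_left this (by positivity)
    _ = t * Real.exp (t/2) * (Real.exp (-t^2/20) * Real.exp (t^2/20)) := by ring
    _ = t * Real.exp (t/2) * 1 := by rw [hexp]
    _ = t * Real.exp (t/2) * 1 := rfl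
    _ = t * Real.exp (t/2) := by ring
  · rw [div_le_one hden, hsinh]
    have : t / 2 ≤ Real.sinh (t/2) := Real.self_le_sinh_iff.mpr (by linarith)
    nlinarith [Real.exp_pos (t/2)]
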